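/- Let X be a nonempty metric space with diam_u X < t < ∞. Then the subset D_t(X) of C_b(X) is path-connected. -/

import Mathlib

open scoped ENNReal

noncomputable section

/-- Ultrametric pseudodistance: infimum over chains from `x` to `y` of the
maximal edge length of the chain. -/
noncomputable def ultraDist {X : Type*} [MetricSpace X] (x y : X) : ℝ≥0∞ :=
  ⨅ (n : ℕ) (f : Fin (n + 1) → X) (_ : f 0 = x) (_ : f (Fin.last n) = y),
    ⨆ i : Fin n, edist (f i.castSucc) (f i.succ)

/-- Ultrametric pseudodiameter. -/
noncomputable def ultraDiam (X : Type*) [MetricSpace X] : ℝ≥0∞ :=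
  ⨆ (x : X) (y : X), ultraDist x y

/-- A correspondence between `X` and `Y`: a relation whose projections are surjective. -/
def IsCorrespondence {X Y : Type*} (R : Set (X × Y)) : Prop :=
  (∀ x : X, ∃ y : Y, (x, y) ∈ R) ∧ (∀ y : Y, ∃ x : X, (x, y) ∈ R)

/-- Distortion of a relation. -/
noncomputable def distortion {X Y : Type*} [MetricSpace X] [MetricSpace Y]
    (R : Set (X × Y)) : ℝ≥0∞ :=
  ⨆ (p ∈ R) (q ∈ R), ENNReal.ofReal |dist p.1 q.1 - dist p.2 q.2|

/-- Gromov–Hausdorff distance: half the infimal distortion of correspondences. -/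
noncomputable def ghDist (X Y : Type*) [MetricSpace X] [MetricSpace Y] : ℝ≥0∞ :=
  (⨅ (R : Set (X × Y)) (_ : IsCorrespondence R), distortion R) / 2


/-- The Kuratowski embedding `x ↦ d(x,·) − d(x₀,·)` into the Banach space of
bounded continuous real functions on `X`. -/
noncomputable def kuratowskiMap {X : Type*} [MetricSpace X] (x₀ : X) (x : X) :
    BoundedContinuousFunction X ℝ :=
  BoundedContinuousFunction.mkOfBound
    ⟨fun y => dist x y - dist x₀ y, by fun_prop⟩
    (2 * dist x x₀)
    (fun y y' => by
      have h1 : |dist x y - dist x₀ y| ≤ dist x x₀ := abs_dist_sub_le x x₀ y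
      have h2 : |dist x y' - dist x₀ y'| ≤ dist x x₀ := abs_dist_sub_le x x₀ y'
      have h3 : |dist x y - dist x₀ y - (dist x y' - dist x₀ y')|
          ≤ |dist x y - dist x₀ y| + |dist x y' - dist x₀ y'| := abs_sub _ _
      simp only [ContinuousMap.coe_mk, Real.dist_eq]
      linarith)

/-- The set `D_t(X)`: the image of the Kuratowski embedding together with all
segments joining images of points at distance at most `t`. -/
noncomputable def Dset {X : Type*} [MetricSpace X] (x₀ : X) (t : ℝ) :
    Set (BoundedContinuousFunction X ℝ) :=
  Set.range (kuratowskiMap x₀) ∪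
    ⋃ (p : X × X) (_ : dist p.1 p.2 ≤ t),
      segment ℝ (kuratowskiMap x₀ p.1) (kuratowskiMap x₀ p.2)

lemma kuratowskiMap_mem_Dset {X : Type*} [MetricSpace X] (x₀ : X) (t : ℝ) (x : X) :
    kuratowskiMap x₀ x ∈ Dset x₀ t :=
  Set.mem_union_left _ ⟨x, rfl⟩

lemma segment_subset_Dset {X : Type*} [MetricSpace X] (x₀ : X) (t : ℝ) {x y : X}
    (hxy : dist x y ≤ t) :
    segment ℝ (kuratowskiMap x₀ x) (kuratowskiMap x₀ y) ⊆ Dset x₀ t := by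
  intro z hz
  exact Set.mem_union_right _ (Set.mem_iUnion.2 ⟨(x, y), Set.mem_iUnion.2 ⟨hxy, hz⟩⟩)

lemma joinedIn_step {X : Type*} [MetricSpace X] (x₀ : X) (t : ℝ) {x y : X}
    (hxy : dist x y ≤ t) :
    JoinedIn (Dset x₀ t) (kuratowskiMap x₀ x) (kuratowskiMap x₀ y) := by
  have hconv : Convex ℝ (segment ℝ (kuratowskiMap x₀ x) (kuratowskiMap x₀ y)) :=
    convex_segment _ _
  have hpc := hconv.isPathConnected ⟨_, left_mem_segment ℝ _ _⟩
  exact (hpc.joinedIn _ (left_mem_segment ℝ _ _) _ (right_mem_segment ℝ _ _)).mono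
    (segment_subset_Dset x₀ t hxy)

lemma joinedIn_chain {X : Type*} [MetricSpace X] (x₀ : X) (t : ℝ) :
    ∀ (n : ℕ) (f : Fin (n + 1) → X),
      (∀ i : Fin n, dist (f i.castSucc) (f i.succ) ≤ t) →
      JoinedIn (Dset x₀ t) (kuratowskiMap x₀ (f 0)) (kuratowskiMap x₀ (f (Fin.last n))) := by
  intro n
  induction n with
  | zero =>
    intro f _
    exact JoinedIn.refl (kuratowskiMap_mem_Dset x₀ t _)
  | succ n ih =>
    intro f hf
    have h1 := ih (f ∘ Fin.castSucc) (fun i => by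
      have := hf i.castSucc
      rw [Fin.succ_castSucc] at this; exact this)
    have h2 : JoinedIn (Dset x₀ t) (kuratowskiMap x₀ (f (Fin.last n).castSucc))
        (kuratowskiMap x₀ (f (Fin.last (n + 1)))) := by
      have := joinedIn_step x₀ t (hf (Fin.last n))
      rwa [Fin.succ_last] at this
    have h0 : (f ∘ Fin.castSucc) 0 = f 0 := by simp
    have hl : (f ∘ Fin.castSucc) (Fin.last n) = f (Fin.last n).castSucc := rfl
    rw [h0, hl] at h1
    exact h1.trans h2

lemma joinedIn_of_ultra {X : Type*} [MetricSpace X] (x₀ : X) (t : ℝ) {x y : X}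
    (h : ultraDist x y < ENNReal.ofReal t) :
    JoinedIn (Dset x₀ t) (kuratowskiMap x₀ x) (kuratowskiMap x₀ y) := by
  rw [ultraDist] at h
  rw [iInf_lt_iff] at h
  obtain ⟨n, hn⟩ := h
  rw [iInf_lt_iff] at hn
  obtain ⟨f, hfn⟩ := hn
  rw [iInf_lt_iff] at hfn
  obtain ⟨h0, hfn⟩ := hfn
  rw [iInf_lt_iff] at hfn
  obtain ⟨hl, hfn⟩ := hfn
  have hedge : ∀ i : Fin n, dist (f i.castSucc) (f i.succ) ≤ t := by
    intro i
    have := lt_of_le_of_lt (le_iSup _ i) hfn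
    exact (edist_lt_ofReal.mp this).le
  have := joinedIn_chain x₀ t n f hedge
  rwa [h0, hl] at this

/-- if `diam_u X < t < ∞`, then `D_t(X)` is path-connected. -/
theorem Dset_pathConnected {X : Type*} [MetricSpace X] [Nonempty X] (x₀ : X) (t : ℝ)
    (h : ultraDiam X < ENNReal.ofReal t) :
    IsPathConnected (Dset x₀ t) := by
  have hud : ∀ x y : X, ultraDist x y < ENNReal.ofReal t := fun x y =>
    lt_of_le_of_lt (le_trans (le_iSup _ y) (le_iSup (fun x => ⨆ y, ultraDist x y) x)) h
  refine ⟨kuratowskiMap x₀ x₀, kuratowskiMap_mem_Dset x₀ t x₀, ?_⟩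
  intro z hz
  rcases hz with ⟨x, rfl⟩ | hz
  · exact joinedIn_of_ultra x₀ t (hud x₀ x)
  · rw [Set.mem_iUnion] at hz
    obtain ⟨p, hz⟩ := hz
    rw [Set.mem_iUnion] at hz
    obtain ⟨hp, hz⟩ := hz
    have hseg : JoinedIn (Dset x₀ t) (kuratowskiMap x₀ p.1) z := by
      have hconv : Convex ℝ (segment ℝ (kuratowskiMap x₀ p.1) (kuratowskiMap x₀ p.2)) :=
        convex_segment _ _
      have hpc := hconv.isPathConnected ⟨_, left_mem_segment ℝ _ _⟩
      exact (hpc.joinedIn _ (left_mem_segment ℝ _ _) _ hz).mono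
        (segment_subset_Dset x₀ t hp)
    exact (joinedIn_of_ultra x₀ t (hud x₀ p.1)).trans hseg

end
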